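/- Let q ∈ ℂ with q ≠ 0 and q² ≠ 1, and let a, b, c, d, γ, ζ ∈ ℂ. Define F(z) = γ(1 − az)(1 − bz)/(1 − z²) and G(z) = ζ(1 − q⁻¹cz)(1 − q⁻¹dz)/(1 − z²). Then for every z ∈ ℂ with z ≠ 0 and z² ∉ {1, q², q⁻²}: F(z)·G(q⁻¹z⁻¹) + F(z⁻¹)·G(q⁻¹z) = −F(z)·G(qz) − F(z⁻¹)·G(qz⁻¹) + γζ(abcd·q⁻² − ab − cd·q⁻² + 1). -/

import Mathlib

set_option maxHeartbeats 1600000 in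
/-- the key identity
`F(z)G(q⁻¹z⁻¹) + F(z⁻¹)G(q⁻¹z) = -F(z)G(qz) - F(z⁻¹)G(qz⁻¹) + Γ`
with `Γ = γζ(abcdq⁻² - ab - cdq⁻² + 1)`. -/
theorem FG_identity (q : ℂ) (hq : q ≠ 0) (hq2 : q ^ 2 ≠ 1)
    (a b c d γ ζ : ℂ)
    (F G : ℂ → ℂ)
    (hF : ∀ w : ℂ, F w = γ * (1 - a * w) * (1 - b * w) / (1 - w ^ 2))
    (hG : ∀ w : ℂ, G w = ζ * (1 - q⁻¹ * c * w) * (1 - q⁻¹ * d * w) / (1 - w ^ 2))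
    (z : ℂ) (hz : z ≠ 0) (h0 : z ^ 2 ≠ 1) (h1 : z ^ 2 ≠ q ^ 2)
    (hm1 : z ^ 2 ≠ q⁻¹ ^ 2) :
    F z * G (q⁻¹ * z⁻¹) + F z⁻¹ * G (q⁻¹ * z)
      = -(F z * G (q * z)) - F z⁻¹ * G (q * z⁻¹)
        + γ * ζ * (a * b * c * d * q⁻¹ ^ 2 - a * b - c * d * q⁻¹ ^ 2 + 1) := by
  have hz2 : z ^ 2 ≠ 0 := pow_ne_zero _ hz
  have hq2' : q ^ 2 ≠ 0 := pow_ne_zero _ hq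
  have hA : q ^ 2 * z ^ 2 ≠ 1 := fun h => hm1 (by
    rw [inv_pow]
    exact eq_inv_of_mul_eq_one_left (by linear_combination h))
  have d1 : (1 : ℂ) - z ^ 2 ≠ 0 := sub_ne_zero.mpr (Ne.symm h0)
  have d2 : z ^ 2 - 1 ≠ 0 := sub_ne_zero.mpr h0
  have d3 : q ^ 2 * z ^ 2 - 1 ≠ 0 := sub_ne_zero.mpr hA
  have d4 : q ^ 2 - z ^ 2 ≠ 0 := sub_ne_zero.mpr (Ne.symm h1)
  have d5 : (1 : ℂ) - q ^ 2 * z ^ 2 ≠ 0 := sub_ne_zero.mpr (Ne.symm hA)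
  have d6 : z ^ 2 - q ^ 2 ≠ 0 := sub_ne_zero.mpr h1
  have e2 : (1 : ℂ) - z⁻¹ ^ 2 ≠ 0 := by
    have h : (1 : ℂ) - z⁻¹ ^ 2 = (z ^ 2 - 1) / z ^ 2 := by field_simp
    rw [h]; exact div_ne_zero d2 hz2
  have e3 : (1 : ℂ) - (q⁻¹ * z⁻¹) ^ 2 ≠ 0 := by
    have h : (1 : ℂ) - (q⁻¹ * z⁻¹) ^ 2 = (q ^ 2 * z ^ 2 - 1) / (q ^ 2 * z ^ 2) := by
      field_simp
    rw [h]; exact div_ne_zero d3 (mul_ne_zero hq2' hz2)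
  have e4 : (1 : ℂ) - (q⁻¹ * z) ^ 2 ≠ 0 := by
    have h : (1 : ℂ) - (q⁻¹ * z) ^ 2 = (q ^ 2 - z ^ 2) / q ^ 2 := by field_simp
    rw [h]; exact div_ne_zero d4 hq2'
  have e5 : (1 : ℂ) - (q * z) ^ 2 ≠ 0 := by rw [mul_pow]; exact d5
  have e6 : (1 : ℂ) - (q * z⁻¹) ^ 2 ≠ 0 := by
    have h : (1 : ℂ) - (q * z⁻¹) ^ 2 = (z ^ 2 - q ^ 2) / z ^ 2 := by field_simp
    rw [h]; exact div_ne_zero d6 hz2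
  have F1 : F z = γ * (1 - a * z) * (1 - b * z) / (1 - z ^ 2) := hF z
  have F2 : F z⁻¹ = γ * (z - a) * (z - b) / (z ^ 2 - 1) := by
    rw [hF, div_eq_div_iff e2 d2]; field_simp
  have G1 : G (q⁻¹ * z⁻¹) = ζ * (q ^ 2 * z - c) * (q ^ 2 * z - d) / (q ^ 2 * (q ^ 2 * z ^ 2 - 1)) := by
    rw [hG, div_eq_div_iff e3 (mul_ne_zero hq2' d3)]; field_simp
  have G2 : G (q⁻¹ * z) = ζ * (q ^ 2 - c * z) * (q ^ 2 - d * z) / (q ^ 2 * (q ^ 2 - z ^ 2)) := by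
    rw [hG, div_eq_div_iff e4 (mul_ne_zero hq2' d4)]; field_simp
  have G3 : G (q * z) = ζ * (1 - c * z) * (1 - d * z) / (1 - q ^ 2 * z ^ 2) := by
    rw [hG, div_eq_div_iff e5 d5]; field_simp
  have G4 : G (q * z⁻¹) = ζ * (z - c) * (z - d) / (z ^ 2 - q ^ 2) := by
    rw [hG, div_eq_div_iff e6 d6]; field_simp
  rw [F1, F2, G1, G2, G3, G4, inv_pow]
  have d3' : z ^ 2 * q ^ 2 - 1 ≠ 0 := by rwa [mul_comm]
  have d5' : 1 - z ^ 2 * q ^ 2 ≠ 0 := by rwa [mul_comm]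
  field_simp
  ring
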